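/- Let G = ℤ * (ℤ × ℤ) be the free product of an infinite cyclic group generated by T with a free abelian group of rank two generated by commuting elements C and D. Then the subgroup of G generated by {T·C·T⁻¹, T·D, T·D⁻¹} is isomorphic to ℤ * (ℤ × ℤ); more precisely, with U = T·D, V = T·C·T⁻¹, W = T·D²·T⁻¹, one has ⟨T·C·T⁻¹, T·D, T·D⁻¹⟩ = ⟨U⟩ * ⟨V, W⟩ where V and W commute and ⟨V, W⟩ ≅ ℤ². -/

import Mathlib

open Monoid

/-- `G = ℤ ∗ (ℤ × ℤ)`, with `T` the generator of the first factor and `C, D` the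
standard (commuting) generators of the second factor. -/
noncomputable abbrev STGroup5 :=
  Monoid.Coprod (Multiplicative ℤ) (Multiplicative ℤ × Multiplicative ℤ)

noncomputable def T5 : STGroup5 := Coprod.inl (Multiplicative.ofAdd 1)
noncomputable def C5 : STGroup5 := Coprod.inr (Multiplicative.ofAdd 1, 1)
noncomputable def D5 : STGroup5 := Coprod.inr (1, Multiplicative.ofAdd 1)

noncomputable def U5 : STGroup5 := T5 * D5
noncomputable def V5 : STGroup5 := T5 * C5 * T5⁻¹
noncomputable def W5 : STGroup5 := T5 * D5 ^ 2 * T5⁻¹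

noncomputable section
namespace STAux5

abbrev A : Type := Multiplicative ℤ
abbrev B : Type := A × A

abbrev F : Bool → Type := fun b => cond b B A

instance instGroupF : ∀ b, Group (F b)
  | false => (inferInstance : Group A)
  | true => (inferInstance : Group B)

instance instDecF : ∀ b, DecidableEq (F b)
  | false => (inferInstance : DecidableEq A)
  | true => (inferInstance : DecidableEq B)

/-- doubling on the second coordinate -/
def dbl : B →* B := (MonoidHom.id A).prodMap (powMonoidHom 2)

theorem dbl_ne_one {x : B} (h : x ≠ 1) : dbl x ≠ 1 := by
  obtain ⟨a, b⟩ := x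
  intro h1
  apply h
  have h1' : (a, b ^ 2) = (1 : B) := h1
  rw [Prod.mk_eq_one] at h1' ⊢
  refine ⟨h1'.1, ?_⟩
  have := congrArg Multiplicative.toAdd h1'.2
  simp only [toAdd_pow, toAdd_one, nsmul_eq_mul, Nat.cast_ofNat] at this
  have hb : Multiplicative.toAdd b = 0 := by omega
  exact Multiplicative.toAdd.injective (by simpa using hb)

def fmap : ∀ b, F b →* Monoid.CoprodI F
  | false => CoprodI.of
  | true => (CoprodI.of (M := F) (i := true)).comp dbl

theorem fstIdx_of_smul {i : Bool} (x : F i) (hx : x ≠ 1) (w : CoprodI.Word F)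
    (hw : w.fstIdx ≠ some i) : (CoprodI.of x • w).fstIdx = some i := by
  classical
  rw [CoprodI.Word.of_smul_def, CoprodI.Word.equivPair_eq_of_fstIdx_ne hw]
  simp [CoprodI.Word.rcons, hx]

theorem gen1_ne_one : (Multiplicative.ofAdd (1 : ℤ)) ≠ 1 := by
  intro h
  have := congrArg Multiplicative.toAdd h
  simp at this

theorem gen2_ne_one : ((Multiplicative.ofAdd (1 : ℤ), 1) : B) ≠ 1 := by
  intro h
  have := congrArg (fun p : B => Multiplicative.toAdd p.1) h
  simp at this

set_option maxHeartbeats 1000000 in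
theorem M'_inj : Function.Injective (CoprodI.lift fmap) := by
  apply CoprodI.lift_injective_of_ping_pong fmap
      (Or.inr ⟨false, (Cardinal.nat_lt_aleph0 3).le.trans (Cardinal.aleph0_le_mk A)⟩)
      (fun b => {w : CoprodI.Word F | w.fstIdx = some b}) ?_ ?_ ?_
  · intro b
    cases b
    · exact ⟨CoprodI.Word.cons (M := F) (i := false) (Multiplicative.ofAdd (1 : ℤ))
        CoprodI.Word.empty (by simp [CoprodI.Word.fstIdx]) gen1_ne_one, rfl⟩
    · exact ⟨CoprodI.Word.cons (M := F) (i := true) ((Multiplicative.ofAdd (1 : ℤ), 1) : B)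
        CoprodI.Word.empty (by simp [CoprodI.Word.fstIdx]) gen2_ne_one, by simp⟩
  · intro i j hij
    refine Set.disjoint_left.2 fun w h1 h2 => hij ?_
    rw [Set.mem_setOf_eq] at h1 h2
    exact Option.some_injective _ (h1 ▸ h2)
  · intro i j hij h hne1
    intro z hz
    obtain ⟨w, hw, rfl⟩ := hz
    rw [Set.mem_setOf_eq] at hw
    have hw' : w.fstIdx ≠ some i := by rw [hw]; simpa using (Ne.symm hij)
    show ((fmap i) h • w).fstIdx = some i
    cases i
    · exact fstIdx_of_smul h hne1 w hw'
    · exact fstIdx_of_smul (i := true) (dbl h) (dbl_ne_one hne1) w hw'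

def fwd : ∀ b : Bool, F b →* STGroup5
  | false => Coprod.inl
  | true => Coprod.inr

@[simp] theorem fwd_false (x : A) : fwd false x = Coprod.inl x := rfl
@[simp] theorem fwd_true (x : B) : fwd true x = Coprod.inr x := rfl
@[simp] theorem fmap_false (x : A) : fmap false x = CoprodI.of (M := F) (i := false) x := rfl
@[simp] theorem fmap_true (x : B) : fmap true x = CoprodI.of (M := F) (i := true) (dbl x) := rfl

def jj : Monoid.CoprodI F →* STGroup5 := CoprodI.lift fwd

def kk : STGroup5 →* Monoid.CoprodI F :=
  Coprod.lift (CoprodI.of (M := F) (i := false)) (CoprodI.of (M := F) (i := true))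

theorem kk_jj : kk.comp jj = MonoidHom.id _ := by
  apply CoprodI.ext_hom
  intro b
  cases b
  · ext x
    show kk (CoprodI.lift fwd (CoprodI.of x)) = CoprodI.of x
    rw [CoprodI.lift_of]
    show kk (Coprod.inl x) = _
    rw [kk, Coprod.lift_apply_inl]
  · ext x
    show kk (CoprodI.lift fwd (CoprodI.of x)) = CoprodI.of x
    rw [CoprodI.lift_of]
    show kk (Coprod.inr x) = _
    rw [kk, Coprod.lift_apply_inr]

theorem jj_kk : jj.comp kk = MonoidHom.id _ := by
  refine Coprod.hom_ext (DFunLike.ext _ _ fun m => ?_) (DFunLike.ext _ _ fun x => ?_)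
  · show jj (kk (Coprod.inl m)) = Coprod.inl m
    rw [kk, Coprod.lift_apply_inl, jj]
    exact (CoprodI.lift_of (M := F) fwd (i := false) (m := m)).trans rfl
  · show jj (kk (Coprod.inr x)) = Coprod.inr x
    rw [kk, Coprod.lift_apply_inr, jj]
    exact (CoprodI.lift_of (M := F) fwd (i := true) (m := x)).trans rfl

theorem jj_inj : Function.Injective jj :=
  Function.LeftInverse.injective (g := kk)
    (fun x => by rw [← MonoidHom.comp_apply, kk_jj, MonoidHom.id_apply])

theorem kk_inj : Function.Injective kk :=
  Function.LeftInverse.injective (g := jj)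
    (fun x => by rw [← MonoidHom.comp_apply, jj_kk, MonoidHom.id_apply])

def chi : STGroup5 →* STGroup5 :=
  Coprod.lift (zpowersHom _ (D5 * T5)) Coprod.inr

def chi' : STGroup5 →* STGroup5 :=
  Coprod.lift (zpowersHom _ (D5⁻¹ * T5)) Coprod.inr

theorem chi_chi' : chi.comp chi' = MonoidHom.id _ := by
  refine Coprod.hom_ext (MonoidHom.ext_mint ?_) (by ext x; simp [chi, chi'])
  simp [chi, chi', T5, D5, map_mul, map_inv]

theorem chi'_chi : chi'.comp chi = MonoidHom.id _ := by
  refine Coprod.hom_ext (MonoidHom.ext_mint ?_) (by ext x; simp [chi, chi'])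
  simp [chi, chi', T5, D5, map_mul, map_inv]

theorem chi_inj : Function.Injective chi :=
  Function.LeftInverse.injective (g := chi')
    (fun x => by rw [← MonoidHom.comp_apply, chi'_chi, MonoidHom.id_apply])

theorem kk_inl (m : A) : kk (Coprod.inl m) = CoprodI.of (M := F) (i := false) m :=
  Coprod.lift_apply_inl _ _ m

theorem kk_inr (x : B) : kk (Coprod.inr x) = CoprodI.of (M := F) (i := true) x :=
  Coprod.lift_apply_inr _ _ x

theorem Mp_of_false (m : A) :
    CoprodI.lift fmap (CoprodI.of (M := F) (i := false) m)
      = CoprodI.of (M := F) (i := false) m :=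
  (CoprodI.lift_of (M := F) fmap (i := false) (m := m)).trans rfl

theorem Mp_of_true (x : B) :
    CoprodI.lift fmap (CoprodI.of (M := F) (i := true) x)
      = CoprodI.of (M := F) (i := true) (dbl x) :=
  (CoprodI.lift_of (M := F) fmap (i := true) (m := x)).trans rfl

theorem jj_of_false (m : A) : jj (CoprodI.of (M := F) (i := false) m) = Coprod.inl m :=
  (CoprodI.lift_of (M := F) fwd (i := false) (m := m)).trans rfl

theorem jj_of_true (x : B) : jj (CoprodI.of (M := F) (i := true) x) = Coprod.inr x :=
  (CoprodI.lift_of (M := F) fwd (i := true) (m := x)).trans rfl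

def rhs : STGroup5 →* STGroup5 :=
  (((MulAut.conj T5).toMonoidHom.comp chi).comp jj).comp ((CoprodI.lift fmap).comp kk)

theorem rhs_inl (m : A) :
    rhs (Coprod.inl m) = T5 * (D5 * T5) ^ Multiplicative.toAdd m * T5⁻¹ := by
  show (MulAut.conj T5) (chi (jj (CoprodI.lift fmap (kk (Coprod.inl m))))) = _
  rw [kk_inl, Mp_of_false, jj_of_false, chi, Coprod.lift_apply_inl, zpowersHom_apply,
    MulAut.conj_apply]

theorem rhs_inr (x : B) : rhs (Coprod.inr x) = T5 * Coprod.inr (dbl x) * T5⁻¹ := by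
  show (MulAut.conj T5) (chi (jj (CoprodI.lift fmap (kk (Coprod.inr x))))) = _
  rw [kk_inr, Mp_of_true, jj_of_true, chi, Coprod.lift_apply_inr, MulAut.conj_apply]

theorem rhs_inj : Function.Injective rhs := by
  show Function.Injective
    ⇑((((MulAut.conj T5).toMonoidHom.comp chi).comp jj).comp ((CoprodI.lift fmap).comp kk))
  simp only [MonoidHom.coe_comp, MulEquiv.coe_toMonoidHom]
  exact (((MulAut.conj T5).injective.comp chi_inj).comp jj_inj).comp (M'_inj.comp kk_inj)

theorem ext_B {P : Type*} [Monoid P] {f g : B →* P}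
    (h1 : f (Multiplicative.ofAdd 1, 1) = g (Multiplicative.ofAdd 1, 1))
    (h2 : f (1, Multiplicative.ofAdd 1) = g (1, Multiplicative.ofAdd 1)) : f = g := by
  have e1 : f.comp (MonoidHom.inl A A) = g.comp (MonoidHom.inl A A) :=
    MonoidHom.ext_mint (by simpa using h1)
  have e2 : f.comp (MonoidHom.inr A A) = g.comp (MonoidHom.inr A A) :=
    MonoidHom.ext_mint (by simpa using h2)
  ext x
  obtain ⟨m, n⟩ := x
  have hx : (m, n) = ((m, 1) : B) * ((1, n) : B) := by simp
  rw [hx, map_mul, map_mul]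
  exact congrArg₂ (· * ·) (DFunLike.congr_fun e1 m) (DFunLike.congr_fun e2 n)

theorem phi_eq (hc : ∀ m n : Multiplicative ℤ,
    Commute (zpowersHom STGroup5 V5 m) (zpowersHom STGroup5 W5 n)) :
    Coprod.lift (zpowersHom STGroup5 U5)
      (MonoidHom.noncommCoprod (zpowersHom STGroup5 V5) (zpowersHom STGroup5 W5) hc) = rhs := by
  refine Coprod.hom_ext (MonoidHom.ext_mint ?_) (ext_B ?_ ?_)
  · show Coprod.lift (zpowersHom STGroup5 U5)
        (MonoidHom.noncommCoprod (zpowersHom STGroup5 V5) (zpowersHom STGroup5 W5) hc)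
        (Coprod.inl (Multiplicative.ofAdd 1)) =
      rhs (Coprod.inl (Multiplicative.ofAdd 1))
    rw [Coprod.lift_apply_inl, zpowersHom_apply, rhs_inl]
    simp only [toAdd_ofAdd, zpow_one, U5]
    group
  · show Coprod.lift (zpowersHom STGroup5 U5)
        (MonoidHom.noncommCoprod (zpowersHom STGroup5 V5) (zpowersHom STGroup5 W5) hc)
        (Coprod.inr (Multiplicative.ofAdd 1, 1)) =
      rhs (Coprod.inr (Multiplicative.ofAdd 1, 1))
    rw [Coprod.lift_apply_inr, MonoidHom.noncommCoprod_apply, rhs_inr]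
    simp only [zpowersHom_apply, toAdd_ofAdd, zpow_one, toAdd_one, zpow_zero, mul_one, V5, C5]
    simp [dbl]
  · show Coprod.lift (zpowersHom STGroup5 U5)
        (MonoidHom.noncommCoprod (zpowersHom STGroup5 V5) (zpowersHom STGroup5 W5) hc)
        (Coprod.inr (1, Multiplicative.ofAdd 1)) =
      rhs (Coprod.inr (1, Multiplicative.ofAdd 1))
    rw [Coprod.lift_apply_inr, MonoidHom.noncommCoprod_apply, rhs_inr]
    simp only [zpowersHom_apply, toAdd_ofAdd, zpow_one, toAdd_one, zpow_zero, one_mul, W5, D5]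
    simp [dbl, ← map_pow, Prod.pow_mk]

end STAux5
end


/-- The subgroup of `ℤ ∗ (ℤ × ℤ)` generated by `{T C T⁻¹, T D, T D⁻¹}` is itself an
(internal) free product `⟨U⟩ ∗ ⟨V, W⟩` with `U = T D`, `V = T C T⁻¹`, `W = T D² T⁻¹`,
where `V` and `W` commute and generate a copy of `ℤ²`; i.e. the natural map from
`ℤ ∗ (ℤ × ℤ)` sending the generators to `U` and `(V, W)` is injective with range
exactly `⟨T C T⁻¹, T D, T D⁻¹⟩`.  In particular this subgroup is isomorphic to
`ℤ ∗ (ℤ × ℤ)`. -/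
theorem stmt5 :
    V5 * W5 = W5 * V5 ∧
    ∀ hc : ∀ m n : Multiplicative ℤ,
        Commute (zpowersHom STGroup5 V5 m) (zpowersHom STGroup5 W5 n),
      Function.Injective
          (Coprod.lift (zpowersHom STGroup5 U5)
            (MonoidHom.noncommCoprod (zpowersHom STGroup5 V5)
              (zpowersHom STGroup5 W5) hc)) ∧
        (Coprod.lift (zpowersHom STGroup5 U5)
            (MonoidHom.noncommCoprod (zpowersHom STGroup5 V5)
              (zpowersHom STGroup5 W5) hc)).range =
          Subgroup.closure {T5 * C5 * T5⁻¹, T5 * D5, T5 * D5⁻¹} := by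
  constructor
  · have h : C5 * D5 ^ 2 = D5 ^ 2 * C5 := by
      simp only [C5, D5, ← map_pow, ← map_mul]
      rw [mul_comm]
    show (T5 * C5 * T5⁻¹) * (T5 * D5 ^ 2 * T5⁻¹) = (T5 * D5 ^ 2 * T5⁻¹) * (T5 * C5 * T5⁻¹)
    calc (T5 * C5 * T5⁻¹) * (T5 * D5 ^ 2 * T5⁻¹) = T5 * (C5 * D5 ^ 2) * T5⁻¹ := by group
      _ = T5 * (D5 ^ 2 * C5) * T5⁻¹ := by rw [h]
      _ = (T5 * D5 ^ 2 * T5⁻¹) * (T5 * C5 * T5⁻¹) := by group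
  · intro hc
    constructor
    · rw [STAux5.phi_eq hc]
      exact STAux5.rhs_inj
    · have hUc : U5 ∈ Subgroup.closure {T5 * C5 * T5⁻¹, T5 * D5, T5 * D5⁻¹} :=
        Subgroup.subset_closure (by simp [U5])
      have hVc : V5 ∈ Subgroup.closure {T5 * C5 * T5⁻¹, T5 * D5, T5 * D5⁻¹} :=
        Subgroup.subset_closure (by simp [V5])
      have hWc : W5 ∈ Subgroup.closure {T5 * C5 * T5⁻¹, T5 * D5, T5 * D5⁻¹} := by
        have hW5 : W5 = (T5 * D5) * (T5 * D5⁻¹)⁻¹ := by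
          simp only [W5, pow_two]; group
        rw [hW5]
        exact mul_mem (Subgroup.subset_closure (by simp))
          (inv_mem (Subgroup.subset_closure (by simp)))
      apply le_antisymm
      · rintro x ⟨y, rfl⟩
        induction y using Coprod.induction_on with
        | inl m =>
          rw [Coprod.lift_apply_inl, zpowersHom_apply]
          exact Subgroup.zpow_mem _ hUc _
        | inr x =>
          obtain ⟨m, n⟩ := x
          rw [Coprod.lift_apply_inr, MonoidHom.noncommCoprod_apply]
          exact mul_mem (Subgroup.zpow_mem _ hVc _) (Subgroup.zpow_mem _ hWc _)
        | mul a b ha hb =>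
          rw [map_mul]
          exact mul_mem ha hb
      · rw [Subgroup.closure_le]
        intro x hx
        simp only [Set.mem_insert_iff, Set.mem_singleton_iff] at hx
        rcases hx with rfl | rfl | rfl
        · exact ⟨Coprod.inr (Multiplicative.ofAdd 1, 1), by
            rw [Coprod.lift_apply_inr, MonoidHom.noncommCoprod_apply]
            simp [V5]⟩
        · exact ⟨Coprod.inl (Multiplicative.ofAdd 1), by
            rw [Coprod.lift_apply_inl, zpowersHom_apply]
            simp [U5]⟩
        · refine ⟨(Coprod.inr ((1 : Multiplicative ℤ), Multiplicative.ofAdd 1))⁻¹ *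
              Coprod.inl (Multiplicative.ofAdd 1), ?_⟩
          rw [map_mul, map_inv, Coprod.lift_apply_inr, Coprod.lift_apply_inl,
            MonoidHom.noncommCoprod_apply]
          simp only [zpowersHom_apply, toAdd_ofAdd, toAdd_one, zpow_one, zpow_zero, one_mul, W5, U5]
          group
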